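/- arXiv:2209.08935 — 3 statements merged into one kernel-verified Lean document; each statement's English description precedes it below -/
import Mathlib

section
/- Suppose v ∈ ℝ^n satisfies ‖v‖_∞ ≤ θ and ‖v‖₁ ≤ k·θ, where θ > 0 and k is a positive integer. Then there exist N vectors u₁, …, u_N ∈ ℝ^n and coefficients λ₁, …, λ_N with 0 ≤ λ_j ≤ 1 and Σ_{j=1}^N λ_j = 1 such that v = Σ_{j=1}^N λ_j·u_j, each u_j is k-sparse, and ‖u_j‖₁ ≤ ‖v‖₁ and ‖u_j‖_∞ ≤ θ for every j. -/
open scoped BigOperators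

noncomputable section

/-- A vector is `k`-sparse if it has at most `k` nonzero entries. -/
def sparseV {n : ℕ} (k : ℕ) (x : Fin n → ℝ) : Prop := {i | x i ≠ 0}.ncard ≤ k

/-- ℓ₁ norm of a real vector. -/
def norm1 {n : ℕ} (x : Fin n → ℝ) : ℝ := ∑ i, |x i|

def fracSet {n : ℕ} (θ : ℝ) (v : Fin n → ℝ) : Finset (Fin n) :=
  Finset.univ.filter (fun i => v i ≠ 0 ∧ |v i| < θ)

def moveVec {n : ℕ} (v : Fin n → ℝ) (i j : Fin n) (t : ℝ) : Fin n → ℝ :=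
  Function.update (Function.update v i (v i * (|v i| + t) / |v i|)) j
    (v j * (|v j| - t) / |v j|)

lemma base_sparse {n : ℕ} (v : Fin n → ℝ) (θ : ℝ) (hθ : 0 < θ) (k : ℕ)
    (hinf : ∀ i, |v i| ≤ θ) (h1 : norm1 v ≤ k * θ)
    (hF : (fracSet θ v).card ≤ 1) : sparseV k v := by
  classical
  set Z : Finset (Fin n) := Finset.univ.filter (fun i => v i ≠ 0) with hZ
  have hsetZ : {i | v i ≠ 0} = (Z : Set (Fin n)) := by
    ext i; simp [hZ]
  have hcard : sparseV k v ↔ Z.card ≤ k := by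
    unfold sparseV; rw [hsetZ, Set.ncard_coe_finset]
  rw [hcard]
  have hFZ : fracSet θ v ⊆ Z := by
    intro x hx
    simp only [fracSet, Finset.mem_filter] at hx
    simp [hZ, hx.2.1]
  -- every element of Z \ F has |v x| = θ
  have hfull : ∀ x ∈ Z \ fracSet θ v, θ ≤ |v x| := by
    intro x hx
    simp only [Finset.mem_sdiff, hZ, Finset.mem_filter, fracSet, Finset.mem_univ,
      true_and, not_and, not_lt] at hx
    exact hx.2 hx.1
  have hsum1 : ∀ (T : Finset (Fin n)), ∑ x ∈ T, |v x| ≤ norm1 v := by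
    intro T
    apply Finset.sum_le_sum_of_subset_of_nonneg (Finset.subset_univ T)
    intro x _ _; positivity
  have hsdθ : ((Z \ fracSet θ v).card : ℝ) * θ ≤ ∑ x ∈ Z \ fracSet θ v, |v x| := by
    calc ((Z \ fracSet θ v).card : ℝ) * θ = ∑ _x ∈ Z \ fracSet θ v, θ := by
          rw [Finset.sum_const, nsmul_eq_mul]
      _ ≤ _ := Finset.sum_le_sum hfull
  rcases Finset.eq_empty_or_nonempty (fracSet θ v) with hFe | ⟨i0, hi0⟩
  · -- no fractional coordinates: Z \ F = Z
    have : (Z.card : ℝ) * θ ≤ (k : ℝ) * θ := by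
      calc (Z.card : ℝ) * θ = ((Z \ fracSet θ v).card : ℝ) * θ := by rw [hFe, Finset.sdiff_empty]
        _ ≤ ∑ x ∈ Z \ fracSet θ v, |v x| := hsdθ
        _ ≤ norm1 v := hsum1 _
        _ ≤ k * θ := h1
    exact_mod_cast le_of_mul_le_mul_right this hθ
  · -- one fractional coordinate i0
    have hi0Z : i0 ∈ Z := hFZ hi0
    have hi0pos : 0 < |v i0| := by
      simp only [fracSet, Finset.mem_filter] at hi0
      exact abs_pos.mpr hi0.2.1
    have hins : ∑ x ∈ insert i0 (Z \ fracSet θ v), |v x| =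
        |v i0| + ∑ x ∈ Z \ fracSet θ v, |v x| := by
      rw [Finset.sum_insert (by simp [hi0])]
    have hstrict : ((Z \ fracSet θ v).card : ℝ) * θ < (k : ℝ) * θ := by
      calc ((Z \ fracSet θ v).card : ℝ) * θ
          < |v i0| + ∑ x ∈ Z \ fracSet θ v, |v x| := by linarith [hsdθ]
        _ = ∑ x ∈ insert i0 (Z \ fracSet θ v), |v x| := hins.symm
        _ ≤ norm1 v := hsum1 _
        _ ≤ k * θ := h1
    have hlt : (Z \ fracSet θ v).card < k := by
      exact_mod_cast lt_of_mul_lt_mul_right hstrict hθ.le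
    have hcards : Z.card = (Z \ fracSet θ v).card + (fracSet θ v).card :=
      (Finset.card_sdiff_add_card_eq_card hFZ).symm
    omega

lemma moveVec_abs {n : ℕ} (v : Fin n → ℝ) (i j : Fin n) (hij : i ≠ j) (t : ℝ)
    (hi : v i ≠ 0) (hj : v j ≠ 0) (ht0 : 0 ≤ t) (htj : t ≤ |v j|) :
    ∀ x, |moveVec v i j t x| =
      |v x| + (if x = i then t else 0) + (if x = j then -t else 0) := by
  intro x
  have hiabs : (0:ℝ) < |v i| := abs_pos.mpr hi
  have hjabs : (0:ℝ) < |v j| := abs_pos.mpr hj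
  by_cases hxj : x = j
  · have hxi : x ≠ i := by rw [hxj]; exact fun h => hij h.symm
    have hthis : moveVec v i j t x = v j * (|v j| - t) / |v j| := by
      rw [hxj]; simp [moveVec]
    rw [hthis, if_neg hxi, if_pos hxj]
    rw [abs_div, abs_mul, abs_of_nonneg (by linarith : (0:ℝ) ≤ |v j| - t), abs_abs, hxj]
    field_simp
    ring
  · by_cases hxi : x = i
    · have hthis : moveVec v i j t x = v i * (|v i| + t) / |v i| := by
        subst hxi
        unfold moveVec
        rw [Function.update_of_ne hxj]
        simp
      rw [hthis, if_pos hxi, if_neg hxj]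
      rw [abs_div, abs_mul, abs_of_nonneg (by linarith : (0:ℝ) ≤ |v i| + t), abs_abs, hxi]
      field_simp
      ring
    · have : moveVec v i j t x = v x := by
        simp [moveVec, Function.update_of_ne hxj, Function.update_of_ne hxi]
      rw [this, if_neg hxi, if_neg hxj]; ring

lemma moveVec_norm1 {n : ℕ} (v : Fin n → ℝ) (i j : Fin n) (hij : i ≠ j) (t : ℝ)
    (hi : v i ≠ 0) (hj : v j ≠ 0) (ht0 : 0 ≤ t) (htj : t ≤ |v j|) :
    norm1 (moveVec v i j t) = norm1 v := by
  unfold norm1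
  have h := moveVec_abs v i j hij t hi hj ht0 htj
  calc ∑ x, |moveVec v i j t x|
      = ∑ x, (|v x| + (if x = i then t else 0) + (if x = j then -t else 0)) := by
        exact Finset.sum_congr rfl (fun x _ => h x)
    _ = (∑ x, |v x|) + t + (-t) := by
        rw [Finset.sum_add_distrib, Finset.sum_add_distrib]
        simp
    _ = ∑ x, |v x| := by ring

lemma moveVec_apply_left {n : ℕ} (v : Fin n → ℝ) (i j : Fin n) (hij : i ≠ j) (t : ℝ) :
    moveVec v i j t i = v i * (|v i| + t) / |v i| := by
  unfold moveVec
  rw [Function.update_of_ne hij, Function.update_self]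

lemma moveVec_apply_right {n : ℕ} (v : Fin n → ℝ) (i j : Fin n) (t : ℝ) :
    moveVec v i j t j = v j * (|v j| - t) / |v j| := by
  unfold moveVec
  rw [Function.update_self]

lemma moveVec_apply_other {n : ℕ} (v : Fin n → ℝ) (i j : Fin n) (t : ℝ) {x : Fin n}
    (hxi : x ≠ i) (hxj : x ≠ j) : moveVec v i j t x = v x := by
  unfold moveVec
  rw [Function.update_of_ne hxj, Function.update_of_ne hxi]

lemma main_conv {n : ℕ} (θ : ℝ) (hθ : 0 < θ) (k : ℕ) (s : ℝ) :
    ∀ m : ℕ, ∀ v : Fin n → ℝ, (∀ i, |v i| ≤ θ) → norm1 v ≤ k * θ → norm1 v ≤ s →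
    (fracSet θ v).card ≤ m →
    v ∈ convexHull ℝ {u : Fin n → ℝ | sparseV k u ∧ norm1 u ≤ s ∧ ∀ i, |u i| ≤ θ} := by
  intro m
  induction m with
  | zero =>
    intro v hinf h1 hs hc
    exact subset_convexHull ℝ _ ⟨base_sparse v θ hθ k hinf h1 (hc.trans (by norm_num)), hs, hinf⟩
  | succ m IH =>
    intro v hinf h1 hs hc
    by_cases hsmall : (fracSet θ v).card ≤ 1
    · exact subset_convexHull ℝ _ ⟨base_sparse v θ hθ k hinf h1 hsmall, hs, hinf⟩
    · -- at least two fractional coordinates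
      obtain ⟨i, hi, j, hj, hij⟩ := Finset.one_lt_card.mp (not_le.mp hsmall)
      simp only [fracSet, Finset.mem_filter, Finset.mem_univ, true_and] at hi hj
      obtain ⟨hi0, hiθ⟩ := hi
      obtain ⟨hj0, hjθ⟩ := hj
      have hiabs : (0:ℝ) < |v i| := abs_pos.mpr hi0
      have hjabs : (0:ℝ) < |v j| := abs_pos.mpr hj0
      set a : ℝ := min (θ - |v i|) (|v j|) with ha
      set b : ℝ := min (θ - |v j|) (|v i|) with hb
      have hapos : 0 < a := lt_min (by linarith) hjabs
      have hbpos : 0 < b := lt_min (by linarith) hiabs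
      have haj : a ≤ |v j| := min_le_right _ _
      have hai : a ≤ θ - |v i| := min_le_left _ _
      have hbi : b ≤ |v i| := min_le_right _ _
      have hbj : b ≤ θ - |v j| := min_le_left _ _
      set w₁ : Fin n → ℝ := moveVec v i j a with hw₁
      set w₂ : Fin n → ℝ := moveVec v j i b with hw₂
      have habs₁ := moveVec_abs v i j hij a hi0 hj0 hapos.le haj
      have habs₂ := moveVec_abs v j i hij.symm b hj0 hi0 hbpos.le hbi
      have hnorm₁ : norm1 w₁ = norm1 v := moveVec_norm1 v i j hij a hi0 hj0 hapos.le haj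
      have hnorm₂ : norm1 w₂ = norm1 v := moveVec_norm1 v j i hij.symm b hj0 hi0 hbpos.le hbi
      have hinf₁ : ∀ x, |w₁ x| ≤ θ := by
        intro x
        rw [habs₁ x]
        by_cases hxi : x = i
        · simp [hxi, if_neg hij]; linarith
        · by_cases hxj : x = j
          · simp [hxj, Ne.symm hij]
            have := hinf j; linarith
          · simp [hxi, hxj]; exact hinf x
      have hinf₂ : ∀ x, |w₂ x| ≤ θ := by
        intro x
        rw [habs₂ x]
        by_cases hxj : x = j
        · simp [hxj, Ne.symm hij]; linarith
        · by_cases hxi : x = i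
          · simp [hxi, hij, if_neg hij]
            have := hinf i; linarith
          · simp [hxi, hxj]; exact hinf x
      -- fracSet shrinks
      have hsub : ∀ (p q : Fin n) (hpq : p ≠ q) (t : ℝ) (hp0 : v p ≠ 0) (hq0 : v q ≠ 0)
          (hpθ : |v p| < θ) (hqθ : |v q| < θ),
          fracSet θ (moveVec v p q t) ⊆ fracSet θ v := by
        intro p q hpq t hp0 hq0 hpθ hqθ x hx
        simp only [fracSet, Finset.mem_filter, Finset.mem_univ, true_and] at hx ⊢
        by_cases hxp : x = p
        · exact hxp ▸ ⟨hp0, hpθ⟩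
        · by_cases hxq : x = q
          · exact hxq ▸ ⟨hq0, hqθ⟩
          · rwa [moveVec_apply_other v p q t hxp hxq] at hx
      have hcard₁ : (fracSet θ w₁).card ≤ m := by
        have hss : fracSet θ w₁ ⊂ fracSet θ v := by
          refine (Finset.ssubset_iff_of_subset (hsub i j hij a hi0 hj0 hiθ hjθ)).mpr ?_
          rcases min_cases (θ - |v i|) (|v j|) with ⟨hmin, _⟩ | ⟨hmin, _⟩
          · refine ⟨i, ?_, ?_⟩
            · simp [fracSet, hi0, hiθ]
            · simp only [fracSet, Finset.mem_filter, Finset.mem_univ, true_and, not_and, not_lt]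
              intro _
              rw [habs₁ i, if_pos rfl, if_neg hij, ha, hmin]; ring_nf; exact le_rfl
          · refine ⟨j, ?_, ?_⟩
            · simp [fracSet, hj0, hjθ]
            · simp only [fracSet, Finset.mem_filter, Finset.mem_univ, true_and, not_and, not_lt]
              intro hne
              exfalso
              apply hne
              have : |w₁ j| = 0 := by
                rw [habs₁ j, if_neg (fun h => hij h.symm), if_pos rfl, ha, hmin]; ring
              exact abs_eq_zero.mp this
        have := Finset.card_lt_card hss
        omega
      have hcard₂ : (fracSet θ w₂).card ≤ m := by
        have hss : fracSet θ w₂ ⊂ fracSet θ v := by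
          refine (Finset.ssubset_iff_of_subset (hsub j i hij.symm b hj0 hi0 hjθ hiθ)).mpr ?_
          rcases min_cases (θ - |v j|) (|v i|) with ⟨hmin, _⟩ | ⟨hmin, _⟩
          · refine ⟨j, ?_, ?_⟩
            · simp [fracSet, hj0, hjθ]
            · simp only [fracSet, Finset.mem_filter, Finset.mem_univ, true_and, not_and, not_lt]
              intro _
              rw [habs₂ j, if_pos rfl, if_neg (Ne.symm hij), hb, hmin]; ring_nf; exact le_rfl
          · refine ⟨i, ?_, ?_⟩
            · simp [fracSet, hi0, hiθ]
            · simp only [fracSet, Finset.mem_filter, Finset.mem_univ, true_and, not_and, not_lt]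
              intro hne
              exfalso
              apply hne
              have : |w₂ i| = 0 := by
                rw [habs₂ i, if_neg hij, if_pos rfl, hb, hmin]; ring
              exact abs_eq_zero.mp this
        have := Finset.card_lt_card hss
        omega
      have hmem₁ := IH w₁ hinf₁ (by rw [hnorm₁]; exact h1) (by rw [hnorm₁]; exact hs) hcard₁
      have hmem₂ := IH w₂ hinf₂ (by rw [hnorm₂]; exact h1) (by rw [hnorm₂]; exact hs) hcard₂
      have hab : 0 < a + b := by linarith
      have hv : v = (b / (a + b)) • w₁ + (a / (a + b)) • w₂ := by
        funext x
        simp only [Pi.add_apply, Pi.smul_apply, smul_eq_mul]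
        by_cases hxi : x = i
        · subst hxi
          rw [hw₁, hw₂, moveVec_apply_left v x j hij a, moveVec_apply_right v j x b]
          field_simp
          ring
        · by_cases hxj : x = j
          · subst hxj
            rw [hw₁, hw₂, moveVec_apply_right v i x a, moveVec_apply_left v x i (Ne.symm hij) b]
            field_simp
            ring
          · rw [hw₁, hw₂, moveVec_apply_other v i j a hxi hxj,
              moveVec_apply_other v j i b hxj hxi]
            field_simp
            ring
      rw [hv]
      exact (convex_convexHull ℝ _) hmem₁ hmem₂ (by positivity) (by positivity)
        (by field_simp; ring)

/-- Any vector `v` with `‖v‖_∞ ≤ θ` and `‖v‖₁ ≤ k·θ` is a convex combination of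
`k`-sparse vectors `u_j` with `‖u_j‖₁ ≤ ‖v‖₁` and `‖u_j‖_∞ ≤ θ`. -/
theorem stmt11 {n : ℕ} (v : Fin n → ℝ) (θ : ℝ) (hθ : 0 < θ) (k : ℕ) (hk : 0 < k)
    (hinf : ∀ i, |v i| ≤ θ) (h1 : norm1 v ≤ k * θ) :
    ∃ (N : ℕ) (u : Fin N → Fin n → ℝ) (lam : Fin N → ℝ),
      (∀ j, 0 ≤ lam j ∧ lam j ≤ 1) ∧
      (∑ j, lam j = 1) ∧
      v = (∑ j, lam j • u j) ∧
      ∀ j, sparseV k (u j) ∧ norm1 (u j) ≤ norm1 v ∧ ∀ i, |u j i| ≤ θ := by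
  have hmem := main_conv θ hθ k (norm1 v) (fracSet θ v).card v hinf h1 le_rfl le_rfl
  rw [convexHull_eq] at hmem
  obtain ⟨ι, t, w, z, hw0, hw1, hz, hcm⟩ := hmem
  refine ⟨t.card, fun j => z (t.equivFin.symm j), fun j => w (t.equivFin.symm j), ?_, ?_, ?_, ?_⟩
  · intro j
    refine ⟨hw0 _ (t.equivFin.symm j).2, ?_⟩
    calc w (t.equivFin.symm j : ι) ≤ ∑ i ∈ t, w i :=
          Finset.single_le_sum hw0 (t.equivFin.symm j).2
      _ = 1 := hw1
  · rw [Equiv.sum_comp t.equivFin.symm (fun i : t => w i)]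
    rw [Finset.sum_coe_sort t w]; exact hw1
  · rw [Equiv.sum_comp t.equivFin.symm (fun i : t => w (i : ι) • z (i : ι))]
    rw [Finset.sum_coe_sort t (fun i => w i • z i)]
    rw [← Finset.centerMass_eq_of_sum_1 _ _ hw1, hcm]
  · intro j
    exact hz _ (t.equivFin.symm j).2
end
end

section
/- For any vectors u, v ∈ ℂ^n whose inner product ⟨u, v⟩ is a nonnegative real number, ‖u u* − v v*‖_F ≥ (1/√2)·‖u‖₂·‖u − v‖₂. -/
open scoped BigOperators
open Matrix

noncomputable section

/-- Frobenius norm of a complex matrix. -/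
def frob {N M : ℕ} (A : Matrix (Fin N) (Fin M) ℂ) : ℝ :=
  Real.sqrt (∑ i, ∑ j, ‖A i j‖ ^ 2)

/-- ℓ₂ norm of a complex vector. -/
def norm2c {n : ℕ} (x : Fin n → ℂ) : ℝ := Real.sqrt (∑ i, ‖x i‖ ^ 2)

private lemma normsq_cast (x : ℂ) : ((‖x‖ : ℝ) : ℂ)^2 = x * (starRingEnd ℂ) x := by
  rw [Complex.mul_conj]; norm_cast
  exact (Complex.sq_norm x)

private lemma alg_ineq (s t r : ℝ) (hr : 0 ≤ r) (hs : 0 ≤ s) (ht : 0 ≤ t)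
    (h2 : r ≤ s*t) : (1/2)*s^2*(s^2+t^2-2*r) ≤ s^4+t^4-2*r^2 := by
  nlinarith [mul_nonneg (mul_nonneg hr (sub_nonneg.2 h2)) (mul_nonneg hs ht),
    mul_nonneg (sub_nonneg.2 h2) (sq_nonneg (2*s^2 - t^2)),
    mul_nonneg (sub_nonneg.2 h2) (sq_nonneg t),
    mul_nonneg hr (mul_nonneg (sq_nonneg (s-t)) (mul_nonneg hs ht)),
    mul_nonneg hr (mul_nonneg (sq_nonneg (s-t)) (sq_nonneg s)),
    mul_nonneg hr (mul_nonneg (sq_nonneg (s-t)) (sq_nonneg t))]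

/-- For vectors `u, v ∈ ℂ^n` with `⟨u, v⟩ = v* u` a nonnegative real number,
`‖u u* − v v*‖_F ≥ (1/√2)·‖u‖₂·‖u − v‖₂`. -/
theorem stmt12 {n : ℕ} (u v : Fin n → ℂ)
    (h : ∃ r : ℝ, 0 ≤ r ∧ star v ⬝ᵥ u = (r : ℂ)) :
    (1 / Real.sqrt 2) * norm2c u * norm2c (u - v) ≤
      frob (vecMulVec u (star u) - vecMulVec v (star v)) := by
  obtain ⟨r, hr0, hr⟩ := h
  set A : ℝ := ∑ i, ‖u i‖ ^ 2 with hAdef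
  set B : ℝ := ∑ i, ‖v i‖ ^ 2 with hBdef
  have hA : 0 ≤ A := Finset.sum_nonneg fun i _ => sq_nonneg _
  have hB : 0 ≤ B := Finset.sum_nonneg fun i _ => sq_nonneg _
  -- basic complex sums
  have hvu : ∑ i, (starRingEnd ℂ) (v i) * u i = (r : ℂ) := by
    simpa [dotProduct, Pi.star_apply] using hr
  have hvu' : ∑ i, u i * (starRingEnd ℂ) (v i) = (r : ℂ) := by
    rw [← hvu]; exact Finset.sum_congr rfl fun i _ => mul_comm _ _
  have huv : ∑ i, (starRingEnd ℂ) (u i) * v i = (r : ℂ) := by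
    have := congrArg (starRingEnd ℂ) hvu'
    simpa [map_sum, _root_.map_mul, Complex.conj_conj, mul_comm] using this
  have huv' : ∑ i, v i * (starRingEnd ℂ) (u i) = (r : ℂ) := by
    rw [← huv]; exact Finset.sum_congr rfl fun i _ => mul_comm _ _
  have huu : ∑ i, u i * (starRingEnd ℂ) (u i) = (A : ℂ) := by
    rw [hAdef]; push_cast
    exact Finset.sum_congr rfl fun i _ => (normsq_cast (u i)).symm
  have hvv : ∑ i, v i * (starRingEnd ℂ) (v i) = (B : ℂ) := by
    rw [hBdef]; push_cast
    exact Finset.sum_congr rfl fun i _ => (normsq_cast (v i)).symm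
  -- Frobenius norm squared
  have hfrob_sq : (∑ i, ∑ j,
      ‖(vecMulVec u (star u) - vecMulVec v (star v)) i j‖ ^ 2)
      = A^2 + B^2 - 2*r^2 := by
    have hentry : ∀ i j : Fin n, (vecMulVec u (star u) - vecMulVec v (star v)) i j
        = u i * (starRingEnd ℂ) (u j) - v i * (starRingEnd ℂ) (v j) := by
      intro i j; simp [vecMulVec_apply]
    have hC : ((∑ i, ∑ j,
        ‖(vecMulVec u (star u) - vecMulVec v (star v)) i j‖ ^ 2 : ℝ) : ℂ)
        = ∑ i, ∑ j, ((u i * (starRingEnd ℂ) (u j) - v i * (starRingEnd ℂ) (v j)) *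
            (starRingEnd ℂ) (u i * (starRingEnd ℂ) (u j) - v i * (starRingEnd ℂ) (v j))) := by
      push_cast
      refine Finset.sum_congr rfl fun i _ => Finset.sum_congr rfl fun j _ => ?_
      rw [← hentry i j]
      exact normsq_cast _
    have hexp : ∀ i j : Fin n,
        (u i * (starRingEnd ℂ) (u j) - v i * (starRingEnd ℂ) (v j)) *
          (starRingEnd ℂ) (u i * (starRingEnd ℂ) (u j) - v i * (starRingEnd ℂ) (v j))
        = (u i * (starRingEnd ℂ) (u i)) * (u j * (starRingEnd ℂ) (u j))
          + (v i * (starRingEnd ℂ) (v i)) * (v j * (starRingEnd ℂ) (v j))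
          - (u i * (starRingEnd ℂ) (v i)) * ((starRingEnd ℂ) (u j) * v j)
          - (v i * (starRingEnd ℂ) (u i)) * ((starRingEnd ℂ) (v j) * u j) := by
      intro i j
      simp only [map_sub, _root_.map_mul, Complex.conj_conj]
      ring
    have hCsum : (∑ i, ∑ j, ((u i * (starRingEnd ℂ) (u j) - v i * (starRingEnd ℂ) (v j)) *
            (starRingEnd ℂ) (u i * (starRingEnd ℂ) (u j) - v i * (starRingEnd ℂ) (v j))))
        = (A:ℂ)^2 + (B:ℂ)^2 - 2*(r:ℂ)^2 := by
      simp only [hexp, Finset.sum_sub_distrib, Finset.sum_add_distrib,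
        ← Finset.mul_sum, ← Finset.sum_mul]
      rw [huu, hvv, hvu', huv, huv', hvu]
      ring
    have : ((∑ i, ∑ j,
        ‖(vecMulVec u (star u) - vecMulVec v (star v)) i j‖ ^ 2 : ℝ) : ℂ)
        = ((A^2 + B^2 - 2*r^2 : ℝ) : ℂ) := by
      rw [hC, hCsum]; push_cast; ring
    exact_mod_cast this
  -- norm of u - v squared
  have hsub : (∑ i, ‖(u - v) i‖ ^ 2) = A + B - 2*r := by
    have hC : ((∑ i, ‖(u - v) i‖ ^ 2 : ℝ) : ℂ)
        = ∑ i, ((u i - v i) * (starRingEnd ℂ) (u i - v i)) := by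
      push_cast
      refine Finset.sum_congr rfl fun i _ => ?_
      simpa using normsq_cast (u i - v i)
    have hCsum : (∑ i, ((u i - v i) * (starRingEnd ℂ) (u i - v i)))
        = (A:ℂ) + (B:ℂ) - 2*(r:ℂ) := by
      have : ∀ i, (u i - v i) * (starRingEnd ℂ) (u i - v i)
          = u i * (starRingEnd ℂ) (u i) + v i * (starRingEnd ℂ) (v i)
            - u i * (starRingEnd ℂ) (v i) - v i * (starRingEnd ℂ) (u i) := by
        intro i; simp only [map_sub]; ring
      simp only [this, Finset.sum_sub_distrib, Finset.sum_add_distrib]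
      rw [huu, hvv, hvu', huv']
      ring
    have : ((∑ i, ‖(u - v) i‖ ^ 2 : ℝ) : ℂ) = ((A + B - 2*r : ℝ) : ℂ) := by
      rw [hC, hCsum]; push_cast; ring
    exact_mod_cast this
  have hsubnn : 0 ≤ A + B - 2*r := by
    rw [← hsub]; exact Finset.sum_nonneg fun i _ => sq_nonneg _
  -- Cauchy-Schwarz: r ≤ √B * √A
  have hCS : r ≤ Real.sqrt A * Real.sqrt B := by
    set U : EuclideanSpace ℂ (Fin n) := (WithLp.equiv 2 (Fin n → ℂ)).symm u
    set V : EuclideanSpace ℂ (Fin n) := (WithLp.equiv 2 (Fin n → ℂ)).symm v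
    have hinner : (inner ℂ V U : ℂ) = (r : ℂ) := by
      rw [PiLp.inner_apply]
      simpa [RCLike.inner_apply, U, V, WithLp.equiv] using hvu'
    have h1 : ‖(inner ℂ V U : ℂ)‖ ≤ ‖V‖ * ‖U‖ := norm_inner_le_norm V U
    rw [hinner] at h1
    have hnU : ‖U‖ = Real.sqrt A := by
      rw [EuclideanSpace.norm_eq, hAdef]
      rfl
    have hnV : ‖V‖ = Real.sqrt B := by
      rw [EuclideanSpace.norm_eq, hBdef]
      rfl
    rw [hnU, hnV] at h1
    calc r = ‖(r:ℂ)‖ := by rw [Complex.norm_real, Real.norm_of_nonneg hr0]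
    _ ≤ Real.sqrt B * Real.sqrt A := h1
    _ = Real.sqrt A * Real.sqrt B := mul_comm _ _
  -- put everything together
  have hkey : (1/2) * A * (A + B - 2*r) ≤ A^2 + B^2 - 2*r^2 := by
    have h := alg_ineq (Real.sqrt A) (Real.sqrt B) r hr0 (Real.sqrt_nonneg A)
      (Real.sqrt_nonneg B) hCS
    have e1 : Real.sqrt A ^ 2 = A := Real.sq_sqrt hA
    have e2 : Real.sqrt B ^ 2 = B := Real.sq_sqrt hB
    have e3 : Real.sqrt A ^ 4 = A^2 := by
      rw [show Real.sqrt A ^ 4 = (Real.sqrt A ^ 2)^2 by ring, e1]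
    have e4 : Real.sqrt B ^ 4 = B^2 := by
      rw [show Real.sqrt B ^ 4 = (Real.sqrt B ^ 2)^2 by ring, e2]
    rw [e1, e2, e3, e4] at h
    exact h
  unfold frob norm2c
  rw [hfrob_sq, hsub]
  have hhalf : (1:ℝ) / Real.sqrt 2 = Real.sqrt (1/2) := by
    rw [one_div, one_div, Real.sqrt_inv]
  rw [hhalf, ← Real.sqrt_mul (by norm_num : (0:ℝ) ≤ 1/2),
    ← Real.sqrt_mul (by positivity : (0:ℝ) ≤ 1/2 * A)]
  exact Real.sqrt_le_sqrt (by rw [mul_assoc] at hkey ⊢; linarith [hkey])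
end
end

section
/- Let a ∈ ℂ^n be a complex standard Gaussian random vector and b ∈ ℝ. Let u₁, u₂, u₃ ∈ ℂ^n be orthonormal vectors, λ₁, λ₂ ∈ ℝ, σ₁, σ₂, σ₃ ∈ ℂ, and set H := λ₁·u₁u₁* + λ₂·u₂u₂* and h := σ₁u₁ + σ₂u₂ + σ₃u₃. Then the random variable ξ := a* H a + 2·Re( b·(a* h) ) satisfies E[ξ⁴] ≤ 576·( ‖H‖_F² + b²·‖h‖₂² )², where ‖H‖_F² = λ₁² + λ₂² and ‖h‖₂² = |σ₁|² + |σ₂|² + |σ₃|². -/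
open scoped BigOperators ENNReal NNReal
open MeasureTheory ProbabilityTheory Matrix

noncomputable section

set_option linter.unusedSectionVars false

section GaussHelpers
open Real

lemma integrable_pow_mul_gauss (n : ℕ) :
    Integrable (fun x : ℝ => x ^ n * Real.exp (-x ^ 2)) := by
  have h := integrable_rpow_mul_exp_neg_mul_sq (b := 1) one_pos
    (s := (n : ℝ)) (by exact lt_of_lt_of_le (by norm_num) (Nat.cast_nonneg n))
  simpa [Real.rpow_natCast] using h

lemma gauss_I0 : (∫ x : ℝ, x ^ 0 * Real.exp (-x ^ 2)) = Real.sqrt π := by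
  simpa using integral_gaussian 1

lemma gauss_I1 : (∫ x : ℝ, x ^ 1 * Real.exp (-x ^ 2)) = 0 := by
  have hderiv : ∀ x : ℝ, HasDerivAt (fun x : ℝ => -Real.exp (-x ^ 2) / 2)
      (x ^ 1 * Real.exp (-x ^ 2)) x := by
    intro x
    have : HasDerivAt (fun x : ℝ => -x ^ 2) (-(2 * x)) x := by
      exact ((hasDerivAt_pow 2 x).neg).congr_deriv (by norm_num)
    have := (this.exp).neg.div_const 2
    refine this.congr_deriv ?_
    ring
  have hint : Integrable (fun x : ℝ => x ^ 1 * Real.exp (-x ^ 2)) :=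
    integrable_pow_mul_gauss 1
  have hf : Integrable (fun x : ℝ => -Real.exp (-x ^ 2) / 2) := by
    have := ((integrable_exp_neg_mul_sq (b := 1) one_pos).neg.div_const 2)
    exact this.congr (by filter_upwards with x; norm_num)
  exact integral_eq_zero_of_hasDerivAt_of_integrable hderiv hint hf

lemma gauss_rec (n : ℕ) :
    (2 : ℝ) * ∫ x : ℝ, x ^ (n + 2) * Real.exp (-x ^ 2) =
      (n + 1) * ∫ x : ℝ, x ^ n * Real.exp (-x ^ 2) := by
  have hderiv : ∀ x : ℝ, HasDerivAt (fun x : ℝ => x ^ (n + 1) * Real.exp (-x ^ 2))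
      ((n + 1) * x ^ n * Real.exp (-x ^ 2) - 2 * (x ^ (n + 2) * Real.exp (-x ^ 2))) x := by
    intro x
    have h1 : HasDerivAt (fun x : ℝ => x ^ (n + 1)) ((n + 1) * x ^ n) x := by
      simpa using hasDerivAt_pow (n + 1) x
    have h2 : HasDerivAt (fun x : ℝ => Real.exp (-x ^ 2)) (Real.exp (-x ^ 2) * (-(2 * x))) x := by
      have : HasDerivAt (fun x : ℝ => -x ^ 2) (-(2 * x)) x := by
        exact ((hasDerivAt_pow 2 x).neg).congr_deriv (by norm_num)
      exact this.exp
    refine (h1.mul h2).congr_deriv ?_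
    ring
  have hf : Integrable (fun x : ℝ => x ^ (n + 1) * Real.exp (-x ^ 2)) :=
    integrable_pow_mul_gauss (n + 1)
  have hf' : Integrable (fun x : ℝ =>
      (n + 1) * x ^ n * Real.exp (-x ^ 2) - 2 * (x ^ (n + 2) * Real.exp (-x ^ 2))) := by
    have h1 := (integrable_pow_mul_gauss n).const_mul ((n : ℝ) + 1)
    have h2 := (integrable_pow_mul_gauss (n + 2)).const_mul 2
    refine (h1.sub h2).congr ?_
    filter_upwards with x
    simp only [Pi.sub_apply]
    ring
  have h0 := integral_eq_zero_of_hasDerivAt_of_integrable hderiv hf' hf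
  have ha : Integrable (fun x : ℝ => ((n : ℝ) + 1) * x ^ n * Real.exp (-x ^ 2)) :=
    ((integrable_pow_mul_gauss n).const_mul ((n : ℝ) + 1)).congr
      (by filter_upwards with x; ring)
  have hb : Integrable (fun x : ℝ => 2 * (x ^ (n + 2) * Real.exp (-x ^ 2))) :=
    (integrable_pow_mul_gauss (n + 2)).const_mul 2
  rw [integral_sub ha hb, sub_eq_zero, integral_const_mul] at h0
  rw [← h0]
  have : (fun x : ℝ => ((n : ℝ) + 1) * x ^ n * Real.exp (-x ^ 2))
      = fun x : ℝ => ((n : ℝ) + 1) * (x ^ n * Real.exp (-x ^ 2)) := by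
    ext x; ring
  rw [this, integral_const_mul]


section GaussMoments
open Real

lemma sqrtpi_pos : 0 < Real.sqrt π := Real.sqrt_pos.mpr Real.pi_pos

lemma gauss_I2 : (∫ x : ℝ, x ^ 2 * Real.exp (-x ^ 2)) = Real.sqrt π / 2 := by
  have := gauss_rec 0
  rw [gauss_I0] at this
  norm_num at this
  linarith

lemma gauss_I3 : (∫ x : ℝ, x ^ 3 * Real.exp (-x ^ 2)) = 0 := by
  have := gauss_rec 1
  rw [gauss_I1] at this
  norm_num at this
  linarith

lemma gauss_I4 : (∫ x : ℝ, x ^ 4 * Real.exp (-x ^ 2)) = 3 * Real.sqrt π / 4 := by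
  have := gauss_rec 2
  rw [gauss_I2] at this
  norm_num at this
  linarith

lemma gauss_I5 : (∫ x : ℝ, x ^ 5 * Real.exp (-x ^ 2)) = 0 := by
  have := gauss_rec 3
  rw [gauss_I3] at this
  norm_num at this
  linarith

lemma gauss_I6 : (∫ x : ℝ, x ^ 6 * Real.exp (-x ^ 2)) = 15 * Real.sqrt π / 8 := by
  have := gauss_rec 4
  rw [gauss_I4] at this
  norm_num at this
  linarith

lemma gauss_I7 : (∫ x : ℝ, x ^ 7 * Real.exp (-x ^ 2)) = 0 := by
  have := gauss_rec 5
  rw [gauss_I5] at this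
  norm_num at this
  linarith

lemma gauss_I8 : (∫ x : ℝ, x ^ 8 * Real.exp (-x ^ 2)) = 105 * Real.sqrt π / 16 := by
  have := gauss_rec 6
  rw [gauss_I6] at this
  norm_num at this
  linarith

lemma gaussianPDFReal_half (x : ℝ) :
    gaussianPDFReal 0 ((2 : ℝ≥0)⁻¹) x = (Real.sqrt π)⁻¹ * Real.exp (-x ^ 2) := by
  rw [gaussianPDFReal]
  have h1 : ((((2:ℝ≥0)⁻¹ : ℝ≥0)) : ℝ) = 1/2 := by norm_num
  rw [h1]
  have h2 : 2 * π * (1/2) = π := by ring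
  have h3 : -(x - 0) ^ 2 / (2 * (1/2)) = -x ^ 2 := by ring
  rw [h2, h3]

lemma integral_gaussianReal_half (f : ℝ → ℝ) :
    ∫ x, f x ∂(gaussianReal 0 ((2 : ℝ≥0)⁻¹)) =
      (Real.sqrt π)⁻¹ * ∫ x : ℝ, f x * Real.exp (-x ^ 2) := by
  rw [gaussianReal_of_var_ne_zero 0 (by norm_num)]
  have hmeas : Measurable fun x => (gaussianPDFReal 0 ((2 : ℝ≥0)⁻¹) x).toNNReal :=
    (measurable_gaussianPDFReal 0 _).real_toNNReal
  have hpdf : gaussianPDF 0 ((2 : ℝ≥0)⁻¹) =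
      fun x => ((gaussianPDFReal 0 ((2 : ℝ≥0)⁻¹) x).toNNReal : ℝ≥0∞) := by
    ext x; rfl
  rw [hpdf, integral_withDensity_eq_integral_smul hmeas]
  rw [← integral_const_mul]
  congr 1
  ext x
  rw [NNReal.smul_def, Real.coe_toNNReal _ (gaussianPDFReal_nonneg _ _ _),
    gaussianPDFReal_half, smul_eq_mul]
  ring

end GaussMoments

section Lp
variable {Ω : Type} [MeasureSpace Ω] [IsProbabilityMeasure (ℙ : Measure Ω)]

lemma lintegral_pow4_eq {f : Ω → ℝ} (hint : Integrable (fun ω => f ω ^ 4) ℙ) :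
    ∫⁻ ω, (‖f ω‖₊ : ℝ≥0∞) ^ (4 : ℝ) ∂ℙ = ENNReal.ofReal (∫ ω, f ω ^ 4 ∂ℙ) := by
  rw [MeasureTheory.ofReal_integral_eq_lintegral_ofReal hint
    (by filter_upwards with ω; positivity)]
  apply lintegral_congr
  intro ω
  calc ((‖f ω‖₊ : ℝ≥0∞)) ^ (4 : ℝ) = ((‖f ω‖₊ : ℝ≥0∞)) ^ (4 : ℕ) := by
        rw [← ENNReal.rpow_natCast]; norm_num
    _ = ENNReal.ofReal (‖f ω‖ ^ 4) := by
        rw [ENNReal.ofReal_pow (norm_nonneg _), ofReal_norm, enorm_eq_nnnorm]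
    _ = ENNReal.ofReal (f ω ^ 4) := by
        rw [Real.norm_eq_abs, ← abs_pow, abs_of_nonneg (by positivity)]

lemma eLpNorm4_eq {f : Ω → ℝ} (hint : Integrable (fun ω => f ω ^ 4) ℙ) :
    eLpNorm f 4 ℙ = (ENNReal.ofReal (∫ ω, f ω ^ 4 ∂ℙ)) ^ ((4 : ℝ)⁻¹) := by
  rw [eLpNorm_eq_lintegral_rpow_enorm_toReal (by norm_num) (by norm_num),
    show ((4:ℝ≥0∞)).toReal = (4:ℝ) by norm_num]
  simp only [enorm_eq_nnnorm]
  rw [lintegral_pow4_eq hint]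
  norm_num

lemma eLpNorm4_le {f : Ω → ℝ} (hint : Integrable (fun ω => f ω ^ 4) ℙ)
    {A : ℝ} (hA : 0 ≤ A) (hle : ∫ ω, f ω ^ 4 ∂ℙ ≤ A ^ 4) :
    eLpNorm f 4 ℙ ≤ ENNReal.ofReal A := by
  rw [eLpNorm4_eq hint]
  have h1 : ENNReal.ofReal (∫ ω, f ω ^ 4 ∂ℙ) ≤ ENNReal.ofReal (A ^ 4) :=
    ENNReal.ofReal_le_ofReal hle
  calc (ENNReal.ofReal (∫ ω, f ω ^ 4 ∂ℙ)) ^ ((4 : ℝ)⁻¹)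
      ≤ (ENNReal.ofReal (A ^ 4)) ^ ((4 : ℝ)⁻¹) :=
        ENNReal.rpow_le_rpow h1 (by norm_num)
    _ = ENNReal.ofReal A := by
        rw [ENNReal.ofReal_pow hA, ← ENNReal.rpow_natCast (ENNReal.ofReal A) 4,
          ← ENNReal.rpow_mul]
        norm_num

lemma int_pow4_le_of_eLpNorm4_le {f : Ω → ℝ} (hint : Integrable (fun ω => f ω ^ 4) ℙ)
    {B : ℝ} (hB : 0 ≤ B) (hle : eLpNorm f 4 ℙ ≤ ENNReal.ofReal B) :
    ∫ ω, f ω ^ 4 ∂ℙ ≤ B ^ 4 := by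
  have h := ENNReal.rpow_le_rpow hle (by norm_num : (0:ℝ) ≤ 4)
  rw [eLpNorm4_eq hint, ← ENNReal.rpow_mul] at h
  norm_num at h
  rw [← ENNReal.ofReal_pow hB] at h
  exact (ENNReal.ofReal_le_ofReal_iff (by positivity)).mp h

lemma memLp4_of_integrable_pow4 {f : Ω → ℝ} (hm : AEStronglyMeasurable f ℙ)
    (hint : Integrable (fun ω => f ω ^ 4) ℙ) : MemLp f 4 ℙ := by
  refine ⟨hm, ?_⟩
  rw [eLpNorm4_eq hint]
  exact ENNReal.rpow_lt_top_of_nonneg (by norm_num) ENNReal.ofReal_ne_top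

lemma memLp4_integrable_pow4 {f : Ω → ℝ} (hf : MemLp f 4 ℙ) :
    Integrable (fun ω => f ω ^ 4) ℙ := by
  have h := hf.integrable_norm_rpow (by norm_num) (by norm_num)
  refine h.congr ?_
  filter_upwards with ω
  rw [show ((4:ℝ≥0∞)).toReal = ((4:ℕ):ℝ) by norm_num, Real.rpow_natCast,
    Real.norm_eq_abs, ← abs_pow, abs_of_nonneg (by positivity)]

lemma L4_add_bound {f g : Ω → ℝ} (hf : MemLp f 4 ℙ) (hg : MemLp g 4 ℙ)
    {A B : ℝ} (hA : 0 ≤ A) (hB : 0 ≤ B)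
    (hfA : ∫ ω, f ω ^ 4 ∂ℙ ≤ A ^ 4) (hgB : ∫ ω, g ω ^ 4 ∂ℙ ≤ B ^ 4) :
    ∫ ω, (f ω + g ω) ^ 4 ∂ℙ ≤ (A + B) ^ 4 := by
  have hfg : MemLp (f + g) 4 ℙ := hf.add hg
  have hintfg : Integrable (fun ω => (f ω + g ω) ^ 4) ℙ := memLp4_integrable_pow4 hfg
  refine int_pow4_le_of_eLpNorm4_le hintfg (by positivity) ?_
  calc eLpNorm (f + g) 4 ℙ ≤ eLpNorm f 4 ℙ + eLpNorm g 4 ℙ :=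
        eLpNorm_add_le hf.aestronglyMeasurable hg.aestronglyMeasurable (by norm_num)
    _ ≤ ENNReal.ofReal A + ENNReal.ofReal B :=
        add_le_add (eLpNorm4_le (memLp4_integrable_pow4 hf) hA hfA)
          (eLpNorm4_le (memLp4_integrable_pow4 hg) hB hgB)
    _ = ENNReal.ofReal (A + B) := (ENNReal.ofReal_add hA hB).symm

end Lp

section Moments
open Finset

def gmom : ℕ → ℝ → ℝ
  | 0, _ => 1
  | 1, _ => 0
  | 2, V => V
  | 3, _ => 0
  | 4, V => 3 * V ^ 2
  | 5, _ => 0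
  | 6, V => 15 * V ^ 3
  | 7, _ => 0
  | 8, V => 105 * V ^ 4
  | _, _ => 0

@[simp] lemma gmom0 (V : ℝ) : gmom 0 V = 1 := rfl
@[simp] lemma gmom1 (V : ℝ) : gmom 1 V = 0 := rfl
@[simp] lemma gmom2 (V : ℝ) : gmom 2 V = V := rfl
@[simp] lemma gmom3 (V : ℝ) : gmom 3 V = 0 := rfl
@[simp] lemma gmom4 (V : ℝ) : gmom 4 V = 3 * V ^ 2 := rfl
@[simp] lemma gmom5 (V : ℝ) : gmom 5 V = 0 := rfl
@[simp] lemma gmom6 (V : ℝ) : gmom 6 V = 15 * V ^ 3 := rfl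
@[simp] lemma gmom7 (V : ℝ) : gmom 7 V = 0 := rfl
@[simp] lemma gmom8 (V : ℝ) : gmom 8 V = 105 * V ^ 4 := rfl

lemma integrable_pow_gaussianReal (k : ℕ) :
    Integrable (fun x : ℝ => x ^ k) (gaussianReal 0 ((2 : ℝ≥0)⁻¹)) := by
  rw [gaussianReal_of_var_ne_zero 0 (by norm_num)]
  have hmeas : Measurable fun x => (gaussianPDFReal 0 ((2 : ℝ≥0)⁻¹) x).toNNReal :=
    (measurable_gaussianPDFReal 0 _).real_toNNReal
  have hpdf : gaussianPDF 0 ((2 : ℝ≥0)⁻¹) =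
      fun x => ((gaussianPDFReal 0 ((2 : ℝ≥0)⁻¹) x).toNNReal : ℝ≥0∞) := by
    ext x; rfl
  rw [hpdf, integrable_withDensity_iff_integrable_smul hmeas]
  refine ((integrable_pow_mul_gauss k).const_mul ((Real.sqrt π)⁻¹)).congr ?_
  filter_upwards with x
  rw [NNReal.smul_def, Real.coe_toNNReal _ (gaussianPDFReal_nonneg _ _ _),
    gaussianPDFReal_half, smul_eq_mul]
  ring

lemma integral_pow_gaussianReal {k : ℕ} (hk : k ≤ 8) :
    ∫ x, x ^ k ∂(gaussianReal 0 ((2 : ℝ≥0)⁻¹)) = gmom k (1 / 2) := by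
  have hne := sqrtpi_pos.ne'
  interval_cases k <;>
    rw [integral_gaussianReal_half] <;>
    simp only [gauss_I0, gauss_I1, gauss_I2, gauss_I3, gauss_I4, gauss_I5, gauss_I6,
      gauss_I7, gauss_I8, gmom0, gmom1, gmom2, gmom3, gmom4, gmom5, gmom6, gmom7, gmom8] <;>
    field_simp <;> ring

variable {Ω : Type} [MeasureSpace Ω] [IsProbabilityMeasure (ℙ : Measure Ω)]

lemma single_int {W : Ω → ℝ} (hm : Measurable W)
    (hmap : Measure.map W ℙ = gaussianReal 0 ((2 : ℝ≥0)⁻¹)) (k : ℕ) :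
    Integrable (fun ω => W ω ^ k) ℙ := by
  have h1 : Integrable (fun x : ℝ => x ^ k) (Measure.map W ℙ) := by
    rw [hmap]; exact integrable_pow_gaussianReal k
  exact (integrable_map_measure (measurable_id.pow_const k).aestronglyMeasurable
    hm.aemeasurable).mp h1

lemma single_mom {W : Ω → ℝ} (hm : Measurable W)
    (hmap : Measure.map W ℙ = gaussianReal 0 ((2 : ℝ≥0)⁻¹)) {k : ℕ} (hk : k ≤ 8) :
    ∫ ω, W ω ^ k ∂ℙ = gmom k (1 / 2) := by
  have h : ∫ ω, W ω ^ k ∂ℙ = ∫ x, x ^ k ∂(Measure.map W ℙ) :=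
    (integral_map hm.aemeasurable
      (Measurable.aestronglyMeasurable (measurable_id.pow_const k))).symm
  rw [h, hmap, integral_pow_gaussianReal hk]

lemma sum_moments {ι : Type*} [DecidableEq ι] (W : ι → Ω → ℝ) (hm : ∀ i, Measurable (W i))
    (hindep : iIndepFun W ℙ)
    (hmap : ∀ i, Measure.map (W i) ℙ = gaussianReal 0 ((2 : ℝ≥0)⁻¹))
    (c : ι → ℝ) (s : Finset ι) :
    (∀ k, k ≤ 8 → Integrable (fun ω => (∑ i ∈ s, c i * W i ω) ^ k) ℙ) ∧
    (∀ k, k ≤ 8 → ∫ ω, (∑ i ∈ s, c i * W i ω) ^ k ∂ℙ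
        = gmom k ((∑ i ∈ s, c i ^ 2) / 2)) := by
  classical
  induction s using Finset.cons_induction with
  | empty =>
      constructor <;> intro k hk
      · simp only [Finset.sum_empty]
        exact (integrable_const _).congr (by filter_upwards with ω; rfl)
      · simp only [Finset.sum_empty]
        interval_cases k <;> simp
  | cons i s hi ih =>
      obtain ⟨ihint, ihmom⟩ := ih
      set S : Ω → ℝ := fun ω => ∑ j ∈ s, c j * W j ω with hSdef
      set X : Ω → ℝ := fun ω => c i * W i ω with hXdef
      have hfam : iIndepFun
          (fun j => (fun x : ℝ => c j * x) ∘ W j) ℙ :=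
        hindep.comp (fun j => fun x : ℝ => c j * x) (fun j => measurable_id.const_mul _)
      have hSX : IndepFun S X ℙ := by
        have h := iIndepFun.indepFun_finsetSum_of_notMem hfam
          (fun j => (hm j).const_mul _) hi
        have hs : (∑ j ∈ s, (fun x : ℝ => c j * x) ∘ W j) = S := by
          funext ω; simp [hSdef, Finset.sum_apply]
        rwa [hs] at h
      have hXint : ∀ k, k ≤ 8 → Integrable (fun ω => X ω ^ k) ℙ := by
        intro k hk
        refine ((single_int (hm i) (hmap i) k).const_mul (c i ^ k)).congr ?_
        filter_upwards with ω
        simp [hXdef, mul_pow]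
      have hXmom : ∀ k, k ≤ 8 → ∫ ω, X ω ^ k ∂ℙ = gmom k (c i ^ 2 / 2) := by
        intro k hk
        have : ∫ ω, X ω ^ k ∂ℙ = c i ^ k * ∫ ω, W i ω ^ k ∂ℙ := by
          rw [← integral_const_mul]
          congr 1; funext ω; simp [hXdef, mul_pow]
        rw [this, single_mom (hm i) (hmap i) hk]
        interval_cases k <;> simp <;> ring
      have hmul : ∀ j m : ℕ, j ≤ 8 → m ≤ 8 →
          Integrable (fun ω => S ω ^ j * X ω ^ m) ℙ ∧
          ∫ ω, S ω ^ j * X ω ^ m ∂ℙ = (∫ ω, S ω ^ j ∂ℙ) * ∫ ω, X ω ^ m ∂ℙ := by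
        intro j m hj hm'
        have hind : IndepFun (fun ω => S ω ^ j) (fun ω => X ω ^ m) ℙ :=
          hSX.comp (measurable_id.pow_const j) (measurable_id.pow_const m)
        exact ⟨hind.integrable_mul (ihint j hj) (hXint m hm'),
          hind.integral_fun_mul_eq_mul_integral (ihint j hj).aestronglyMeasurable (hXint m hm').aestronglyMeasurable⟩
      have hexp : ∀ k : ℕ, (fun ω => (∑ j ∈ Finset.cons i s hi, c j * W j ω) ^ k)
          = fun ω => ∑ j ∈ Finset.range (k + 1),
              S ω ^ j * X ω ^ (k - j) * (k.choose j) := by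
        intro k
        funext ω
        have hc : (∑ j ∈ Finset.cons i s hi, c j * W j ω) = S ω + X ω := by
          rw [Finset.sum_cons]; exact add_comm _ _
        rw [hc, add_pow]
      have hterm : ∀ k : ℕ, k ≤ 8 → ∀ j ∈ Finset.range (k + 1),
          Integrable (fun ω => S ω ^ j * X ω ^ (k - j) * (k.choose j)) ℙ := by
        intro k hk j hj
        have hj8 : j ≤ 8 := le_trans (Nat.le_of_lt_succ (Finset.mem_range.mp hj)) hk
        exact ((hmul j (k - j) hj8 (le_trans (Nat.sub_le _ _) hk)).1.mul_const _)
      constructor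
      · intro k hk
        rw [hexp k]
        exact integrable_finset_sum _ (hterm k hk)
      · intro k hk
        rw [hexp k, integral_finset_sum _ (hterm k hk)]
        have hre : ∀ j ∈ Finset.range (k + 1),
            ∫ ω, S ω ^ j * X ω ^ (k - j) * (k.choose j) ∂ℙ
              = gmom j ((∑ l ∈ s, c l ^ 2) / 2) * gmom (k - j) (c i ^ 2 / 2)
                  * (k.choose j) := by
          intro j hj
          have hj8 : j ≤ 8 := le_trans (Nat.le_of_lt_succ (Finset.mem_range.mp hj)) hk
          have hkj8 : k - j ≤ 8 := le_trans (Nat.sub_le _ _) hk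
          rw [integral_mul_const, (hmul j (k - j) hj8 hkj8).2, ihmom j hj8,
            hXmom (k - j) hkj8]
        rw [Finset.sum_congr rfl hre, Finset.sum_cons]
        set V : ℝ := (∑ l ∈ s, c l ^ 2) / 2
        set d : ℝ := c i ^ 2 / 2
        have hVd : (c i ^ 2 + ∑ l ∈ s, c l ^ 2) / 2 = V + d := by
          simp only [V, d]; ring
        rw [hVd]
        interval_cases k <;>
          simp [Finset.sum_range_succ, Nat.choose] <;> ring

end Moments

section Aux

lemma pow4_sq_add_sq_le (x y : ℝ) : (x ^ 2 + y ^ 2) ^ 4 ≤ 8 * x ^ 8 + 8 * y ^ 8 := by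
  have h1 : (x ^ 2 + y ^ 2) ^ 2 ≤ 2 * (x ^ 4 + y ^ 4) := by nlinarith [sq_nonneg (x ^ 2 - y ^ 2)]
  have h2 : (x ^ 4 + y ^ 4) ^ 2 ≤ 2 * (x ^ 8 + y ^ 8) := by nlinarith [sq_nonneg (x ^ 4 - y ^ 4)]
  calc (x ^ 2 + y ^ 2) ^ 4 = ((x ^ 2 + y ^ 2) ^ 2) ^ 2 := by ring
    _ ≤ (2 * (x ^ 4 + y ^ 4)) ^ 2 := by
        apply pow_le_pow_left₀ (by positivity) h1
    _ = 4 * (x ^ 4 + y ^ 4) ^ 2 := by ring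
    _ ≤ 8 * x ^ 8 + 8 * y ^ 8 := by nlinarith

lemma final_ineq (p q r t₁ t₂ s : ℝ) (hp : 0 ≤ p) (hq : 0 ≤ q) (hr : 0 ≤ r)
    (ht₁ : 0 ≤ t₁) (ht₂ : 0 ≤ t₂) (hs : 0 ≤ s)
    (hps : p ^ 2 = Real.sqrt 105 * t₁) (hqs : q ^ 2 = Real.sqrt 105 * t₂)
    (hrs : r ^ 2 = Real.sqrt 12 * s) :
    (p + q + r) ^ 4 ≤ 576 * (t₁ + t₂ + s) ^ 2 := by
  set c := Real.sqrt 105 with hcdef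
  set d := Real.sqrt 12 with hddef
  have hc0 : 0 ≤ c := Real.sqrt_nonneg _
  have hd0 : 0 ≤ d := Real.sqrt_nonneg _
  have hc2 : c ^ 2 = 105 := Real.sq_sqrt (by norm_num)
  have hd2 : d ^ 2 = 12 := Real.sq_sqrt (by norm_num)
  have h2pq : 2 * p * q ≤ c * t₁ + c * t₂ := by nlinarith [sq_nonneg (p - q)]
  have hpr2 : (2 * p * r) ^ 2 = 4 * (c * t₁) * (d * s) := by
    rw [show (2 * p * r) ^ 2 = 4 * p ^ 2 * r ^ 2 by ring, hps, hrs]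
  have h2pr : 2 * p * r ≤ c * s + d * t₁ := by
    have hu : 0 ≤ 2 * p * r := by positivity
    have hv : 0 ≤ c * s + d * t₁ :=
      add_nonneg (mul_nonneg hc0 hs) (mul_nonneg hd0 ht₁)
    have hsq : (2 * p * r) ^ 2 ≤ (c * s + d * t₁) ^ 2 := by
      rw [hpr2]; nlinarith [sq_nonneg (c * s - d * t₁)]
    exact (pow_le_pow_iff_left₀ hu hv two_ne_zero).mp hsq
  have hqr2 : (2 * q * r) ^ 2 = 4 * (c * t₂) * (d * s) := by
    rw [show (2 * q * r) ^ 2 = 4 * q ^ 2 * r ^ 2 by ring, hqs, hrs]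
  have h2qr : 2 * q * r ≤ c * s + d * t₂ := by
    have hu : 0 ≤ 2 * q * r := by positivity
    have hv : 0 ≤ c * s + d * t₂ :=
      add_nonneg (mul_nonneg hc0 hs) (mul_nonneg hd0 ht₂)
    have hsq : (2 * q * r) ^ 2 ≤ (c * s + d * t₂) ^ 2 := by
      rw [hqr2]; nlinarith [sq_nonneg (c * s - d * t₂)]
    exact (pow_le_pow_iff_left₀ hu hv two_ne_zero).mp hsq
  have h1 : (p + q + r) ^ 2 ≤ 2*c*t₁ + 2*c*t₂ + 2*c*s + d*t₁ + d*t₂ + d*s := by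
    have e : (p + q + r) ^ 2 = p ^ 2 + q ^ 2 + r ^ 2 + (2*p*q + 2*p*r + 2*q*r) := by ring
    rw [e, hps, hqs, hrs]
    linarith
  have h5 : (p + q + r) ^ 2 ≤ (2*c + d) * (t₁ + t₂ + s) := by
    calc (p + q + r) ^ 2 ≤ 2*c*t₁ + 2*c*t₂ + 2*c*s + d*t₁ + d*t₂ + d*s := h1
      _ = (2*c + d) * (t₁ + t₂ + s) := by ring
  have hcd : (c * d) ^ 2 = 1260 := by rw [mul_pow, hc2, hd2]; norm_num
  have hcd36 : c * d ≤ 36 := by nlinarith [mul_nonneg hc0 hd0]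
  have h2 : (2 * c + d) ^ 2 ≤ 576 := by
    have e2 : (2 * c + d) ^ 2 = 4 * c ^ 2 + 4 * (c * d) + d ^ 2 := by ring
    rw [e2, hc2, hd2]
    linarith
  calc (p + q + r) ^ 4 = ((p + q + r) ^ 2) ^ 2 := by ring
    _ ≤ ((2 * c + d) * (t₁ + t₂ + s)) ^ 2 := pow_le_pow_left₀ (sq_nonneg _) h5 2
    _ = (2 * c + d) ^ 2 * (t₁ + t₂ + s) ^ 2 := by ring
    _ ≤ 576 * (t₁ + t₂ + s) ^ 2 := mul_le_mul_of_nonneg_right h2 (sq_nonneg _)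

variable {Ω : Type} [MeasureSpace Ω] [IsProbabilityMeasure (ℙ : Measure Ω)]

lemma iIndepFun_ae_congr {ι : Type*} [Countable ι] {f g : ι → Ω → ℝ}
    (h : iIndepFun f ℙ) (hfg : ∀ i, f i =ᵐ[ℙ] g i) :
    iIndepFun g ℙ := by
  rw [iIndepFun_iff_measure_inter_preimage_eq_mul] at h ⊢
  intro S sets hsets
  have hae : ∀ᵐ ω ∂ℙ, ∀ i, f i ω = g i ω := MeasureTheory.ae_all_iff.mpr hfg
  have hpre : ∀ i ∈ S, ℙ (g i ⁻¹' sets i) = ℙ (f i ⁻¹' sets i) := by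
    intro i hi
    apply measure_congr
    filter_upwards [hfg i] with ω hω
    show (ω ∈ g i ⁻¹' sets i) = (ω ∈ f i ⁻¹' sets i)
    simp only [Set.mem_preimage, hω]
  have hint : ℙ (⋂ i ∈ S, g i ⁻¹' sets i) = ℙ (⋂ i ∈ S, f i ⁻¹' sets i) := by
    apply measure_congr
    filter_upwards [hae] with ω hω
    show (ω ∈ ⋂ i ∈ S, g i ⁻¹' sets i) = (ω ∈ ⋂ i ∈ S, f i ⁻¹' sets i)
    simp only [Set.mem_iInter, Set.mem_preimage]
    apply propext
    constructor <;> intro hx i hi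
    · rw [hω i]; exact hx i hi
    · rw [← hω i]; exact hx i hi
  rw [hint, h S hsets]
  exact (Finset.prod_congr rfl hpre).symm

end Aux

section CompAlg
open Matrix

variable {n : ℕ}

def cRe (v : Fin n → ℂ) : Fin n × Bool → ℝ := fun p => if p.2 then (v p.1).re else (v p.1).im
def cIm (v : Fin n → ℂ) : Fin n × Bool → ℝ := fun p => if p.2 then (v p.1).im else -(v p.1).re

lemma dot_conj (v w : Fin n → ℂ) : star v ⬝ᵥ w = (starRingEnd ℂ) (star w ⬝ᵥ v) := by
  rw [dotProduct, dotProduct, map_sum]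
  apply Finset.sum_congr rfl
  intro j _
  simp [Pi.star_apply, Complex.star_def, _root_.map_mul, Complex.conj_conj, mul_comm]

lemma re_dot_eq (v z : Fin n → ℂ) :
    (star z ⬝ᵥ v).re
      = ∑ p : Fin n × Bool, cRe v p * (if p.2 then (z p.1).re else (z p.1).im) := by
  rw [dotProduct, Complex.re_sum, Fintype.sum_prod_type]
  apply Finset.sum_congr rfl
  intro j _
  rw [Fintype.sum_bool]
  simp [cRe, Pi.star_apply, Complex.star_def, Complex.mul_re]
  ring

lemma im_dot_eq (v z : Fin n → ℂ) :
    (star z ⬝ᵥ v).im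
      = ∑ p : Fin n × Bool, cIm v p * (if p.2 then (z p.1).re else (z p.1).im) := by
  rw [dotProduct, Complex.im_sum, Fintype.sum_prod_type]
  apply Finset.sum_congr rfl
  intro j _
  rw [Fintype.sum_bool]
  simp [cIm, Pi.star_apply, Complex.star_def, Complex.mul_im]
  ring

lemma sum_sq_cRe (v : Fin n → ℂ) : ∑ p : Fin n × Bool, (cRe v p) ^ 2 = (star v ⬝ᵥ v).re := by
  rw [dotProduct, Complex.re_sum, Fintype.sum_prod_type]
  apply Finset.sum_congr rfl
  intro j _
  rw [Fintype.sum_bool]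
  simp [cRe, Pi.star_apply, Complex.star_def, Complex.mul_re]
  ring

lemma sum_sq_cIm (v : Fin n → ℂ) : ∑ p : Fin n × Bool, (cIm v p) ^ 2 = (star v ⬝ᵥ v).re := by
  rw [dotProduct, Complex.re_sum, Fintype.sum_prod_type]
  apply Finset.sum_congr rfl
  intro j _
  rw [Fintype.sum_bool]
  simp [cIm, Pi.star_apply, Complex.star_def, Complex.mul_re]
  ring

lemma vmv_mulVec (u x : Fin n → ℂ) :
    (vecMulVec u (star u)).mulVec x = (star u ⬝ᵥ x) • u := by
  funext i
  simp only [Matrix.mulVec, Matrix.vecMulVec_apply, dotProduct, Pi.smul_apply,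
    smul_eq_mul, Finset.sum_mul]
  apply Finset.sum_congr rfl
  intro j _
  simp [Pi.star_apply]
  ring

lemma quad_re (u : Fin n → ℂ) (z : Fin n → ℂ) :
    (star z ⬝ᵥ (vecMulVec u (star u)).mulVec z)
      = ((((star z ⬝ᵥ u).re) ^ 2 + ((star z ⬝ᵥ u).im) ^ 2 : ℝ) : ℂ) := by
  rw [vmv_mulVec, dotProduct_smul, smul_eq_mul, dot_conj u z]
  rw [mul_comm, Complex.mul_conj]
  rw [Complex.normSq_apply]
  push_cast
  ring

end CompAlg

end GaussHelpers

set_option maxHeartbeats 1600000 in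
/-- Fourth moment bound for `ξ = a* H a + 2 Re(b (a* h))` for a complex standard
Gaussian vector `a`, where `H = λ₁ u₁u₁* + λ₂ u₂u₂*` and `h = σ₁u₁ + σ₂u₂ + σ₃u₃`
with `u₁, u₂, u₃` orthonormal; here `‖H‖_F² = λ₁² + λ₂²` and
`‖h‖₂² = |σ₁|² + |σ₂|² + |σ₃|²`. -/
theorem stmt15 (n : ℕ) (Ω : Type) [MeasureSpace Ω] [IsProbabilityMeasure (ℙ : Measure Ω)]
    (a : Ω → Fin n → ℂ)
    (h_indep : iIndepFun
      (fun p : Fin n × Bool => fun ω =>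
        if p.2 then (a ω p.1).re else (a ω p.1).im) ℙ)
    (h_gauss : ∀ p : Fin n × Bool,
      Measure.map (fun ω => if p.2 then (a ω p.1).re else (a ω p.1).im) ℙ =
        gaussianReal 0 (2 : ℝ≥0)⁻¹)
    (b : ℝ) (u₁ u₂ u₃ : Fin n → ℂ)
    (hu₁ : star u₁ ⬝ᵥ u₁ = 1) (hu₂ : star u₂ ⬝ᵥ u₂ = 1) (hu₃ : star u₃ ⬝ᵥ u₃ = 1)
    (hu₁₂ : star u₁ ⬝ᵥ u₂ = 0) (hu₁₃ : star u₁ ⬝ᵥ u₃ = 0) (hu₂₃ : star u₂ ⬝ᵥ u₃ = 0)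
    (lam₁ lam₂ : ℝ) (σ₁ σ₂ σ₃ : ℂ)
    (H : Matrix (Fin n) (Fin n) ℂ)
    (hH : H = (lam₁ : ℂ) • vecMulVec u₁ (star u₁) + (lam₂ : ℂ) • vecMulVec u₂ (star u₂))
    (h : Fin n → ℂ) (hh : h = σ₁ • u₁ + σ₂ • u₂ + σ₃ • u₃) :
    (∫ ω, ((star (a ω) ⬝ᵥ H.mulVec (a ω)).re
        + 2 * ((b : ℂ) * (star (a ω) ⬝ᵥ h)).re) ^ 4) ≤
      576 * ((lam₁ ^ 2 + lam₂ ^ 2) +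
        b ^ 2 * (‖σ₁‖ ^ 2 + ‖σ₂‖ ^ 2 + ‖σ₃‖ ^ 2)) ^ 2 := by
  classical
  -- measurable modifications
  have hZae : ∀ p : Fin n × Bool,
      AEMeasurable (fun ω => if p.2 then (a ω p.1).re else (a ω p.1).im) ℙ := by
    intro p
    by_contra hc
    have h0 := MeasureTheory.Measure.map_of_not_aemeasurable hc
    rw [h_gauss p] at h0
    have h1 : (gaussianReal 0 ((2 : ℝ≥0)⁻¹)) Set.univ = 1 := measure_univ
    rw [h0] at h1
    simp at h1
  have hWex : ∀ p : Fin n × Bool, ∃ g : Ω → ℝ, Measurable g ∧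
      (fun ω => if p.2 then (a ω p.1).re else (a ω p.1).im) =ᵐ[ℙ] g :=
    fun p => ⟨(hZae p).mk _, (hZae p).measurable_mk, (hZae p).ae_eq_mk⟩
  choose W hWm hZW using hWex
  have hWmap : ∀ p, Measure.map (W p) ℙ = gaussianReal 0 ((2 : ℝ≥0)⁻¹) := fun p => by
    rw [← Measure.map_congr (hZW p)]
    exact h_gauss p
  have hWindep : iIndepFun W ℙ := iIndepFun_ae_congr h_indep hZW
  -- abbreviations
  set Sσ : ℝ := ‖σ₁‖ ^ 2 + ‖σ₂‖ ^ 2 + ‖σ₃‖ ^ 2 with hSσdef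
  have hSσ0 : 0 ≤ Sσ := by positivity
  have hnsq : ∀ z : ℂ, ‖z‖ ^ 2 = z.re ^ 2 + z.im ^ 2 := fun z => by
    rw [Complex.sq_norm, Complex.normSq_apply]; ring
  -- ‖h‖² = Sσ
  have h21 : star u₂ ⬝ᵥ u₁ = 0 := by rw [dot_conj, hu₁₂, map_zero]
  have h31 : star u₃ ⬝ᵥ u₁ = 0 := by rw [dot_conj, hu₁₃, map_zero]
  have h32 : star u₃ ⬝ᵥ u₂ = 0 := by rw [dot_conj, hu₂₃, map_zero]
  have hSh : (star h ⬝ᵥ h).re = Sσ := by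
    rw [hh]
    simp only [star_add, star_smul, add_dotProduct, dotProduct_add,
      smul_dotProduct, dotProduct_smul, hu₁, hu₂, hu₃, hu₁₂, hu₁₃, hu₂₃,
      h21, h31, h32, smul_eq_mul, mul_zero, mul_one, add_zero, zero_add,
      RCLike.star_def, smul_zero]
    rw [hSσdef]
    simp only [Complex.add_re, Complex.mul_re, Complex.conj_re, Complex.conj_im,
      hnsq σ₁, hnsq σ₂, hnsq σ₃]
    ring
  -- the W-variables
  set R1 : Ω → ℝ := fun ω => ∑ p : Fin n × Bool, cRe u₁ p * W p ω with hR1def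
  set I1 : Ω → ℝ := fun ω => ∑ p : Fin n × Bool, cIm u₁ p * W p ω with hI1def
  set R2 : Ω → ℝ := fun ω => ∑ p : Fin n × Bool, cRe u₂ p * W p ω with hR2def
  set I2 : Ω → ℝ := fun ω => ∑ p : Fin n × Bool, cIm u₂ p * W p ω with hI2def
  set cL : Fin n × Bool → ℝ := fun p => 2 * b * cRe h p with hcLdef
  set L : Ω → ℝ := fun ω => ∑ p : Fin n × Bool, cL p * W p ω with hLdef
  set q1 : Ω → ℝ := fun ω => R1 ω ^ 2 + I1 ω ^ 2 with hq1def
  set q2 : Ω → ℝ := fun ω => R2 ω ^ 2 + I2 ω ^ 2 with hq2def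
  -- measurability
  have hR1m : Measurable R1 := Finset.measurable_sum _ (fun p _ => (hWm p).const_mul _)
  have hI1m : Measurable I1 := Finset.measurable_sum _ (fun p _ => (hWm p).const_mul _)
  have hR2m : Measurable R2 := Finset.measurable_sum _ (fun p _ => (hWm p).const_mul _)
  have hI2m : Measurable I2 := Finset.measurable_sum _ (fun p _ => (hWm p).const_mul _)
  have hLm : Measurable L := Finset.measurable_sum _ (fun p _ => (hWm p).const_mul _)
  have hq1m : Measurable q1 := (hR1m.pow_const 2).add (hI1m.pow_const 2)
  have hq2m : Measurable q2 := (hR2m.pow_const 2).add (hI2m.pow_const 2)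
  -- moments
  obtain ⟨hR1int, hR1mom⟩ := sum_moments W hWm hWindep hWmap (cRe u₁) Finset.univ
  obtain ⟨hI1int, hI1mom⟩ := sum_moments W hWm hWindep hWmap (cIm u₁) Finset.univ
  obtain ⟨hR2int, hR2mom⟩ := sum_moments W hWm hWindep hWmap (cRe u₂) Finset.univ
  obtain ⟨hI2int, hI2mom⟩ := sum_moments W hWm hWindep hWmap (cIm u₂) Finset.univ
  obtain ⟨hLint, hLmom⟩ := sum_moments W hWm hWindep hWmap cL Finset.univ
  have hVu₁R : (∑ p : Fin n × Bool, (cRe u₁ p) ^ 2) / 2 = 1 / 2 := by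
    rw [sum_sq_cRe, hu₁, Complex.one_re]
  have hVu₁I : (∑ p : Fin n × Bool, (cIm u₁ p) ^ 2) / 2 = 1 / 2 := by
    rw [sum_sq_cIm, hu₁, Complex.one_re]
  have hVu₂R : (∑ p : Fin n × Bool, (cRe u₂ p) ^ 2) / 2 = 1 / 2 := by
    rw [sum_sq_cRe, hu₂, Complex.one_re]
  have hVu₂I : (∑ p : Fin n × Bool, (cIm u₂ p) ^ 2) / 2 = 1 / 2 := by
    rw [sum_sq_cIm, hu₂, Complex.one_re]
  have hVL : (∑ p : Fin n × Bool, (cL p) ^ 2) / 2 = 2 * b ^ 2 * Sσ := by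
    rw [hcLdef]
    have : ∑ p : Fin n × Bool, (2 * b * cRe h p) ^ 2
        = 4 * b ^ 2 * ∑ p : Fin n × Bool, (cRe h p) ^ 2 := by
      rw [Finset.mul_sum]
      exact Finset.sum_congr rfl (fun p _ => by ring)
    rw [this, sum_sq_cRe, hSh]
    ring
  have hER18 : ∫ ω, R1 ω ^ 8 ∂ℙ = 105 / 16 := by
    rw [hR1def]
    rw [hR1mom 8 le_rfl, hVu₁R]
    norm_num
  have hEI18 : ∫ ω, I1 ω ^ 8 ∂ℙ = 105 / 16 := by
    rw [hI1def, hI1mom 8 le_rfl, hVu₁I]; norm_num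
  have hER28 : ∫ ω, R2 ω ^ 8 ∂ℙ = 105 / 16 := by
    rw [hR2def, hR2mom 8 le_rfl, hVu₂R]; norm_num
  have hEI28 : ∫ ω, I2 ω ^ 8 ∂ℙ = 105 / 16 := by
    rw [hI2def, hI2mom 8 le_rfl, hVu₂I]; norm_num
  have hEL4 : ∫ ω, L ω ^ 4 ∂ℙ = 12 * (b ^ 2 * Sσ) ^ 2 := by
    rw [hLdef, hLmom 4 (by norm_num), hVL]
    simp only [gmom4]
    ring
  -- q moments
  have hq1int4 : Integrable (fun ω => q1 ω ^ 4) ℙ := by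
    have hgint : Integrable (fun ω => 8 * R1 ω ^ 8 + 8 * I1 ω ^ 8) ℙ :=
      ((hR1int 8 le_rfl).const_mul 8).add ((hI1int 8 le_rfl).const_mul 8)
    refine hgint.mono ((hq1m.pow_const 4)).aestronglyMeasurable ?_
    filter_upwards with ω
    rw [Real.norm_eq_abs, Real.norm_eq_abs, abs_of_nonneg (by positivity),
      abs_of_nonneg (by positivity)]
    exact pow4_sq_add_sq_le _ _
  have hq2int4 : Integrable (fun ω => q2 ω ^ 4) ℙ := by
    have hgint : Integrable (fun ω => 8 * R2 ω ^ 8 + 8 * I2 ω ^ 8) ℙ :=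
      ((hR2int 8 le_rfl).const_mul 8).add ((hI2int 8 le_rfl).const_mul 8)
    refine hgint.mono ((hq2m.pow_const 4)).aestronglyMeasurable ?_
    filter_upwards with ω
    rw [Real.norm_eq_abs, Real.norm_eq_abs, abs_of_nonneg (by positivity),
      abs_of_nonneg (by positivity)]
    exact pow4_sq_add_sq_le _ _
  have hq1mom4 : ∫ ω, q1 ω ^ 4 ∂ℙ ≤ 105 := by
    have hgint : Integrable (fun ω => 8 * R1 ω ^ 8 + 8 * I1 ω ^ 8) ℙ :=
      ((hR1int 8 le_rfl).const_mul 8).add ((hI1int 8 le_rfl).const_mul 8)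
    have hm := integral_mono hq1int4 hgint (fun ω => pow4_sq_add_sq_le (R1 ω) (I1 ω))
    rw [integral_add ((hR1int 8 le_rfl).const_mul 8) ((hI1int 8 le_rfl).const_mul 8),
      integral_const_mul, integral_const_mul, hER18, hEI18] at hm
    linarith
  have hq2mom4 : ∫ ω, q2 ω ^ 4 ∂ℙ ≤ 105 := by
    have hgint : Integrable (fun ω => 8 * R2 ω ^ 8 + 8 * I2 ω ^ 8) ℙ :=
      ((hR2int 8 le_rfl).const_mul 8).add ((hI2int 8 le_rfl).const_mul 8)
    have hm := integral_mono hq2int4 hgint (fun ω => pow4_sq_add_sq_le (R2 ω) (I2 ω))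
    rw [integral_add ((hR2int 8 le_rfl).const_mul 8) ((hI2int 8 le_rfl).const_mul 8),
      integral_const_mul, integral_const_mul, hER28, hEI28] at hm
    linarith
  -- MemLp
  have hq1mem : MemLp q1 4 ℙ := memLp4_of_integrable_pow4 hq1m.aestronglyMeasurable hq1int4
  have hq2mem : MemLp q2 4 ℙ := memLp4_of_integrable_pow4 hq2m.aestronglyMeasurable hq2int4
  have hLmem : MemLp L 4 ℙ :=
    memLp4_of_integrable_pow4 hLm.aestronglyMeasurable (hLint 4 (by norm_num))
  -- constants
  set c4 : ℝ := Real.sqrt (Real.sqrt 105) with hc4def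
  set d4 : ℝ := Real.sqrt (Real.sqrt 12) with hd4def
  have hc40 : 0 ≤ c4 := Real.sqrt_nonneg _
  have hd40 : 0 ≤ d4 := Real.sqrt_nonneg _
  have hc42 : c4 ^ 2 = Real.sqrt 105 := Real.sq_sqrt (Real.sqrt_nonneg _)
  have hd42 : d4 ^ 2 = Real.sqrt 12 := Real.sq_sqrt (Real.sqrt_nonneg _)
  have hc44 : c4 ^ 4 = 105 := by
    rw [show c4 ^ 4 = (c4 ^ 2) ^ 2 by ring, hc42, Real.sq_sqrt (by norm_num : (0:ℝ) ≤ 105)]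
  have hd44 : d4 ^ 4 = 12 := by
    rw [show d4 ^ 4 = (d4 ^ 2) ^ 2 by ring, hd42, Real.sq_sqrt (by norm_num : (0:ℝ) ≤ 12)]
  set A₁ : ℝ := |lam₁| * c4 with hA₁def
  set A₂ : ℝ := |lam₂| * c4 with hA₂def
  set C : ℝ := d4 * Real.sqrt (b ^ 2 * Sσ) with hCdef
  have hA₁0 : 0 ≤ A₁ := mul_nonneg (abs_nonneg _) hc40
  have hA₂0 : 0 ≤ A₂ := mul_nonneg (abs_nonneg _) hc40
  have hC0 : 0 ≤ C := mul_nonneg hd40 (Real.sqrt_nonneg _)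
  have habs4 : ∀ x : ℝ, |x| ^ 4 = x ^ 4 := fun x => by
    rw [← abs_pow, abs_of_nonneg (by positivity)]
  have hA₁4 : A₁ ^ 4 = lam₁ ^ 4 * 105 := by
    rw [hA₁def, mul_pow, habs4, hc44]
  have hA₂4 : A₂ ^ 4 = lam₂ ^ 4 * 105 := by
    rw [hA₂def, mul_pow, habs4, hc44]
  have hsqrt4 : (Real.sqrt (b ^ 2 * Sσ)) ^ 4 = (b ^ 2 * Sσ) ^ 2 := by
    rw [show ∀ y : ℝ, y ^ 4 = (y ^ 2) ^ 2 from fun y => by ring,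
      Real.sq_sqrt (by positivity)]
  have hC4 : C ^ 4 = 12 * (b ^ 2 * Sσ) ^ 2 := by
    rw [hCdef, mul_pow, hd44, hsqrt4]
  -- first L4 bound
  have hf1 : ∫ ω, (lam₁ * q1 ω) ^ 4 ∂ℙ ≤ A₁ ^ 4 := by
    have : ∫ ω, (lam₁ * q1 ω) ^ 4 ∂ℙ = lam₁ ^ 4 * ∫ ω, q1 ω ^ 4 ∂ℙ := by
      rw [← integral_const_mul]
      congr 1; funext ω; ring
    rw [this, hA₁4]
    have h4 : (0:ℝ) ≤ lam₁ ^ 4 := by positivity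
    nlinarith [hq1mom4]
  have hf2 : ∫ ω, (lam₂ * q2 ω) ^ 4 ∂ℙ ≤ A₂ ^ 4 := by
    have : ∫ ω, (lam₂ * q2 ω) ^ 4 ∂ℙ = lam₂ ^ 4 * ∫ ω, q2 ω ^ 4 ∂ℙ := by
      rw [← integral_const_mul]
      congr 1; funext ω; ring
    rw [this, hA₂4]
    have h4 : (0:ℝ) ≤ lam₂ ^ 4 := by positivity
    nlinarith [hq2mom4]
  have h12 : ∫ ω, (lam₁ * q1 ω + lam₂ * q2 ω) ^ 4 ∂ℙ ≤ (A₁ + A₂) ^ 4 :=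
    L4_add_bound (hq1mem.const_mul lam₁) (hq2mem.const_mul lam₂) hA₁0 hA₂0 hf1 hf2
  have hξ : ∫ ω, ((lam₁ * q1 ω + lam₂ * q2 ω) + L ω) ^ 4 ∂ℙ ≤ ((A₁ + A₂) + C) ^ 4 :=
    L4_add_bound ((hq1mem.const_mul lam₁).add (hq2mem.const_mul lam₂)) hLmem
      (by positivity) hC0 h12 (le_of_eq (by rw [hEL4, hC4]))
  -- identify the integrand a.e.
  have hq : ∀ ω, (star (a ω) ⬝ᵥ H.mulVec (a ω)).re
      = lam₁ * (((star (a ω) ⬝ᵥ u₁).re) ^ 2 + ((star (a ω) ⬝ᵥ u₁).im) ^ 2)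
      + lam₂ * (((star (a ω) ⬝ᵥ u₂).re) ^ 2 + ((star (a ω) ⬝ᵥ u₂).im) ^ 2) := by
    intro ω
    rw [hH, Matrix.add_mulVec, Matrix.smul_mulVec, Matrix.smul_mulVec,
      dotProduct_add, dotProduct_smul, dotProduct_smul,
      quad_re u₁, quad_re u₂]
    simp [Complex.add_re, Complex.mul_re, Complex.ofReal_re, Complex.ofReal_im,
      smul_eq_mul]
    simp [← Complex.ofReal_pow, Complex.ofReal_re]
  have hl : ∀ ω, 2 * ((b : ℂ) * (star (a ω) ⬝ᵥ h)).re = 2 * b * (star (a ω) ⬝ᵥ h).re := by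
    intro ω
    rw [Complex.mul_re, Complex.ofReal_re, Complex.ofReal_im]
    ring
  have hZWall : ∀ᵐ ω ∂ℙ, ∀ p : Fin n × Bool,
      (if p.2 then (a ω p.1).re else (a ω p.1).im) = W p ω :=
    MeasureTheory.ae_all_iff.mpr hZW
  have hae : (fun ω => ((star (a ω) ⬝ᵥ H.mulVec (a ω)).re
        + 2 * ((b : ℂ) * (star (a ω) ⬝ᵥ h)).re) ^ 4)
      =ᵐ[ℙ] (fun ω => ((lam₁ * q1 ω + lam₂ * q2 ω) + L ω) ^ 4) := by
    filter_upwards [hZWall] with ω hω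
    have e1 : (star (a ω) ⬝ᵥ u₁).re = R1 ω := by
      rw [re_dot_eq, hR1def]
      exact Finset.sum_congr rfl (fun p _ => by rw [hω p])
    have e2 : (star (a ω) ⬝ᵥ u₁).im = I1 ω := by
      rw [im_dot_eq, hI1def]
      exact Finset.sum_congr rfl (fun p _ => by rw [hω p])
    have e3 : (star (a ω) ⬝ᵥ u₂).re = R2 ω := by
      rw [re_dot_eq, hR2def]
      exact Finset.sum_congr rfl (fun p _ => by rw [hω p])
    have e4 : (star (a ω) ⬝ᵥ u₂).im = I2 ω := by
      rw [im_dot_eq, hI2def]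
      exact Finset.sum_congr rfl (fun p _ => by rw [hω p])
    have e5 : 2 * b * (star (a ω) ⬝ᵥ h).re = L ω := by
      rw [re_dot_eq, hLdef, Finset.mul_sum]
      refine Finset.sum_congr rfl (fun p _ => ?_)
      rw [hω p, hcLdef]
      ring
    rw [hq ω, hl ω, e1, e2, e3, e4, e5, hq1def, hq2def]
  have hinteq : (∫ ω, ((star (a ω) ⬝ᵥ H.mulVec (a ω)).re
        + 2 * ((b : ℂ) * (star (a ω) ⬝ᵥ h)).re) ^ 4)
      = ∫ ω, ((lam₁ * q1 ω + lam₂ * q2 ω) + L ω) ^ 4 ∂ℙ :=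
    integral_congr_ae hae
  rw [hinteq]
  -- final numeric bound
  have hfin : ((A₁ + A₂) + C) ^ 4
      ≤ 576 * (lam₁ ^ 2 + lam₂ ^ 2 + b ^ 2 * Sσ) ^ 2 := by
    have hA₁sq : A₁ ^ 2 = Real.sqrt 105 * lam₁ ^ 2 := by
      rw [hA₁def, mul_pow, hc42, sq_abs]; ring
    have hA₂sq : A₂ ^ 2 = Real.sqrt 105 * lam₂ ^ 2 := by
      rw [hA₂def, mul_pow, hc42, sq_abs]; ring
    have hCsq : C ^ 2 = Real.sqrt 12 * (b ^ 2 * Sσ) := by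
      rw [hCdef, mul_pow, hd42, Real.sq_sqrt (by positivity)]
    exact final_ineq A₁ A₂ C (lam₁ ^ 2) (lam₂ ^ 2) (b ^ 2 * Sσ)
      hA₁0 hA₂0 hC0 (by positivity) (by positivity) (by positivity)
      hA₁sq hA₂sq hCsq
  calc ∫ ω, ((lam₁ * q1 ω + lam₂ * q2 ω) + L ω) ^ 4 ∂ℙ
      ≤ ((A₁ + A₂) + C) ^ 4 := hξ
    _ ≤ 576 * (lam₁ ^ 2 + lam₂ ^ 2 + b ^ 2 * Sσ) ^ 2 := hfin
    _ = 576 * ((lam₁ ^ 2 + lam₂ ^ 2) + b ^ 2 * (‖σ₁‖ ^ 2 + ‖σ₂‖ ^ 2 + ‖σ₃‖ ^ 2)) ^ 2 := by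
        rw [hSσdef]
end
end
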